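/- Let 2 ≤ p ≤ n, 1 ≤ q ≤ p−1, 1 ≤ i ≤ n, and let σ ∈ J_p(1,…,n+1) satisfy σ(q) = i and σ(q+1) = i+1. Let c₁ be the cycle on {1,…,n+1} sending n+1 to n, n to n−1, …, i+2 to i+1, and i+1 to n+1, and let c₂ be the cycle sending q+1 to q+2, …, n to n+1, and n+1 to q+1. Set τ̃ = c₁ ∘ σ ∘ c₂. Then τ̃(n+1) = n+1, the restriction τ of τ̃ to {1,…,n} lies in J_{p−1}(1,…,n) with τ(q) = i, and the signatures satisfy (−1)^{i}·(−1)^{σ} = (−1)^{q}·(−1)^{τ}. -/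

import Mathlib

open Finset

/-- The set `J_p(1,…,n)` of shuffles: permutations of `{1,…,n}` (here `Fin n`)
increasing on the first `p` positions and on the remaining `n - p` positions. -/
def shuffles (n p : ℕ) : Finset (Equiv.Perm (Fin n)) :=
  Finset.univ.filter fun σ =>
    (∀ i j : Fin n, i < j → (j : ℕ) < p → σ i < σ j) ∧
    (∀ i j : Fin n, i < j → p ≤ (i : ℕ) → σ i < σ j)

lemma sign_cut (n i : ℕ) (hin : i ≤ n) (c : Equiv.Perm (Fin (n+1)))
    (hc : ∀ k : Fin (n+1), (c k : ℕ) =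
      if (k : ℕ) < i then (k : ℕ) else if (k : ℕ) = i then n else (k : ℕ) - 1) :
    (Equiv.Perm.sign c : ℤ) = (-1) ^ (n - i) := by
  set j : Fin (n+1) := ⟨n - i, by omega⟩ with hj
  have hceq : c = Fin.revPerm * (Fin.cycleRange j) * Fin.revPerm := by
    ext k
    have hrev : ∀ m : Fin (n+1), (Fin.rev m : ℕ) = n - (m : ℕ) := by
      intro m; rw [Fin.val_rev]; omega
    simp only [Equiv.Perm.mul_apply, Fin.revPerm_apply]
    rw [hc k]
    rcases lt_trichotomy (k : ℕ) i with h | h | h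
    · rw [Fin.cycleRange_of_gt (by rw [Fin.lt_def, hrev]; simp only [hj]; omega)]
      rw [hrev, hrev]
      have := k.isLt
      simp only [if_pos h]; omega
    · rw [Fin.cycleRange_of_eq (by apply Fin.ext; rw [hrev]; simp only [hj]; omega)]
      rw [hrev]
      simp only [if_neg (by omega : ¬ (k:ℕ) < i), if_pos h, Fin.val_zero]
      omega
    · have hlt : Fin.rev k < j := by rw [Fin.lt_def, hrev]; simp only [hj]; have := k.isLt; omega
      rw [hrev, Fin.coe_cycleRange_of_lt hlt, hrev]
      have := k.isLt
      simp only [if_neg (by omega : ¬ (k:ℕ) < i), if_neg (by omega : ¬ (k:ℕ) = i)]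
      omega
  rw [hceq, map_mul, map_mul, Fin.sign_cycleRange]
  have hr2 : (Equiv.Perm.sign (Fin.revPerm : Equiv.Perm (Fin (n+1)))) *
      (Equiv.Perm.sign (Fin.revPerm : Equiv.Perm (Fin (n+1)))) = 1 := by
    rw [← map_mul]
    have : (Fin.revPerm : Equiv.Perm (Fin (n+1))) * Fin.revPerm = 1 := by
      ext k; simp [Fin.rev_rev]
    rw [this, map_one]
  have : Equiv.Perm.sign (Fin.revPerm : Equiv.Perm (Fin (n+1))) * (-1) ^ (j : ℕ) *
      Equiv.Perm.sign (Fin.revPerm : Equiv.Perm (Fin (n+1))) = (-1) ^ (j : ℕ) := by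
    rw [mul_comm, ← mul_assoc, hr2, one_mul]
  rw [this]
  simp [hj]

theorem shuffle_contract_pair (n p q i : ℕ) (hp : 2 ≤ p) (hpn : p ≤ n)
    (hq : 1 ≤ q) (hqp : q ≤ p - 1) (hi : 1 ≤ i) (hin : i ≤ n)
    (σ : Equiv.Perm (Fin (n + 1))) (hσ : σ ∈ shuffles (n + 1) p)
    (hσq : ((σ ⟨q - 1, by omega⟩ : Fin (n + 1)) : ℕ) = i - 1)
    (hσq1 : ((σ ⟨q, by omega⟩ : Fin (n + 1)) : ℕ) = i)
    (c₁ c₂ : Equiv.Perm (Fin (n + 1)))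
    (hc₁ : ∀ k : Fin (n + 1), (c₁ k : ℕ) =
      if (k : ℕ) < i then (k : ℕ) else if (k : ℕ) = i then n else (k : ℕ) - 1)
    (hc₂ : ∀ k : Fin (n + 1), (c₂ k : ℕ) =
      if (k : ℕ) < q then (k : ℕ) else if (k : ℕ) = n then q else (k : ℕ) + 1) :
    (c₁ * σ * c₂) (Fin.last n) = Fin.last n ∧
    ∀ τ : Equiv.Perm (Fin n),
      (∀ j : Fin n, (c₁ * σ * c₂) j.castSucc = (τ j).castSucc) →
      τ ∈ shuffles n (p - 1) ∧
      ((τ ⟨q - 1, by omega⟩ : Fin n) : ℕ) = i - 1 ∧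
      (-1 : ℤ) ^ i * (Equiv.Perm.sign σ : ℤ) = (-1 : ℤ) ^ q * (Equiv.Perm.sign τ : ℤ) := by
  simp only [shuffles, Finset.mem_filter, Finset.mem_univ, true_and] at hσ
  obtain ⟨hσ1, hσ2⟩ := hσ
  have hqn1 : q < n + 1 := by omega
  have hq1n1 : q - 1 < n + 1 := by omega
  -- value of c₂ on castSucc
  have hc₂v : ∀ j : Fin n, ((c₂ j.castSucc) : ℕ) =
      if (j : ℕ) < q then (j : ℕ) else (j : ℕ) + 1 := by
    intro j
    have hj := j.isLt
    rw [hc₂]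
    simp only [Fin.coe_castSucc]
    split_ifs <;> omega
  -- τ̃ fixes last
  have hlast : (c₁ * σ * c₂) (Fin.last n) = Fin.last n := by
    have h2 : c₂ (Fin.last n) = ⟨q, hqn1⟩ := by
      apply Fin.ext
      rw [hc₂]
      simp only [Fin.val_last]
      split_ifs <;> omega
    apply Fin.ext
    simp only [Equiv.Perm.mul_apply, h2, Fin.val_last]
    rw [hc₁]
    simp only [hσq1]
    split_ifs <;> omega
  refine ⟨hlast, ?_⟩
  intro τ hτ
  -- values σ (c₂ j.castSucc) are never i
  have hnei : ∀ j : Fin n, ((σ (c₂ j.castSucc)) : ℕ) ≠ i := by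
    intro j hcontra
    have h1 : σ (c₂ j.castSucc) = σ ⟨q, hqn1⟩ := by
      apply Fin.ext; rw [hcontra, hσq1]
    have h2 : c₂ j.castSucc = ⟨q, hqn1⟩ := σ.injective h1
    have h3 : ((c₂ j.castSucc) : ℕ) = q := by rw [h2]
    rw [hc₂v] at h3
    have := j.isLt
    split_ifs at h3 <;> omega
  -- value formula for τ
  have hval : ∀ j : Fin n, (τ j : ℕ) =
      if ((σ (c₂ j.castSucc)) : ℕ) < i then ((σ (c₂ j.castSucc)) : ℕ)
      else ((σ (c₂ j.castSucc)) : ℕ) - 1 := by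
    intro j
    have h1 : ((τ j : Fin n) : ℕ) = (((c₁ * σ * c₂) j.castSucc) : ℕ) := by
      rw [hτ j]; rfl
    rw [h1]
    simp only [Equiv.Perm.mul_apply]
    rw [hc₁]
    have := hnei j
    split_ifs <;> omega
  -- monotonicity core
  have hmono : ∀ a b : Fin n, σ (c₂ a.castSucc) < σ (c₂ b.castSucc) → τ a < τ b := by
    intro a b hlt
    rw [Fin.lt_def] at hlt ⊢
    rw [hval a, hval b]
    have ha := hnei a
    have hb := hnei b
    split_ifs <;> omega
  refine ⟨?_, ?_, ?_⟩
  · -- shuffle membership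
    simp only [shuffles, Finset.mem_filter, Finset.mem_univ, true_and]
    constructor
    · intro a b hab hbp
      apply hmono a b
      apply hσ1
      · rw [Fin.lt_def, hc₂v a, hc₂v b]
        rw [Fin.lt_def] at hab
        split_ifs <;> omega
      · rw [hc₂v b]
        split_ifs <;> omega
    · intro a b hab hpa
      apply hmono a b
      apply hσ2
      · rw [Fin.lt_def, hc₂v a, hc₂v b]
        rw [Fin.lt_def] at hab
        split_ifs <;> omega
      · rw [hc₂v a]
        split_ifs <;> omega
  · -- τ (q-1) = i - 1
    have h2 : c₂ (⟨q - 1, by omega⟩ : Fin n).castSucc = ⟨q - 1, hq1n1⟩ := by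
      apply Fin.ext
      rw [hc₂v]
      simp only [if_pos (by omega : q - 1 < q)]
    rw [hval, h2]
    have h3 : ((σ ⟨q - 1, hq1n1⟩ : Fin (n + 1)) : ℕ) = i - 1 := hσq
    rw [h3, if_pos (by omega : i - 1 < i)]
  · -- signs
    have E3 : (Equiv.Perm.sign τ : ℤ) =
        (Equiv.Perm.sign c₁ : ℤ) * (Equiv.Perm.sign σ : ℤ) * (Equiv.Perm.sign c₂ : ℤ) := by
      have hg : c₁ * σ * c₂ = (Equiv.permCongr finSuccEquivLast.symm) τ.optionCongr := by
        ext x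
        refine Fin.lastCases ?_ ?_ x
        · rw [hlast, Equiv.permCongr_apply]
          simp
        · intro j
          rw [hτ j, Equiv.permCongr_apply]
          simp
      have h4 := congrArg (fun f => (Equiv.Perm.sign f : ℤ)) hg
      simp only [map_mul, Units.val_mul, Equiv.Perm.sign_permCongr,
        Equiv.optionCongr_sign] at h4
      rw [← h4]
    have E1 : (Equiv.Perm.sign c₁ : ℤ) = (-1) ^ (n - i) := sign_cut n i hin c₁ hc₁
    have hc₂inv : ∀ k : Fin (n+1), ((c₂⁻¹ k) : ℕ) =
        if (k : ℕ) < q then (k : ℕ) else if (k : ℕ) = q then n else (k : ℕ) - 1 := by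
      intro k
      have hk : c₂ (c₂⁻¹ k) = k := c₂.apply_symm_apply k
      have h2 : (k : ℕ) = if ((c₂⁻¹ k) : ℕ) < q then ((c₂⁻¹ k) : ℕ)
          else if ((c₂⁻¹ k) : ℕ) = n then q else ((c₂⁻¹ k) : ℕ) + 1 := by
        conv_lhs => rw [← hk]
        rw [hc₂]
      have hb := (c₂⁻¹ k).isLt
      have hkb := k.isLt
      split_ifs at h2 ⊢ <;> omega
    have E2 : (Equiv.Perm.sign c₂ : ℤ) = (-1) ^ (n - q) := by
      have h5 : (Equiv.Perm.sign c₂⁻¹ : ℤ) = (-1) ^ (n - q) :=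
        sign_cut n q (by omega) c₂⁻¹ hc₂inv
      rwa [Equiv.Perm.sign_inv] at h5
    -- combine
    have hsq : ∀ a : ℕ, (-1 : ℤ) ^ a * (-1) ^ a = 1 := by
      intro a; rw [← pow_add]; exact Even.neg_one_pow ⟨a, rfl⟩
    have h4 : ∀ a b : ℕ, a ≤ b → (-1 : ℤ) ^ (b - a) * (-1) ^ a = (-1) ^ b := by
      intro a b h; rw [← pow_add]; congr 1; omega
    have key : ∀ a : ℕ, a ≤ n → (-1 : ℤ) ^ n * (-1) ^ (n - a) = (-1) ^ a := by
      intro a ha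
      calc (-1 : ℤ) ^ n * (-1) ^ (n - a) = ((-1) ^ (n - a) * (-1) ^ a) * (-1) ^ (n - a) := by
            rw [h4 a n ha]
        _ = ((-1) ^ (n - a) * (-1) ^ (n - a)) * (-1) ^ a := by ring
        _ = (-1) ^ a := by rw [hsq (n - a), one_mul]
    rw [E3, E1, E2]
    have hqn : (-1 : ℤ) ^ q * (-1) ^ (n - q) = (-1) ^ n := by
      rw [mul_comm]; exact h4 q n (by omega)
    have final : (-1 : ℤ) ^ q * ((-1) ^ (n - i) * (Equiv.Perm.sign σ : ℤ) * (-1) ^ (n - q))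
        = (-1) ^ i * (Equiv.Perm.sign σ : ℤ) := by
      calc (-1 : ℤ) ^ q * ((-1) ^ (n - i) * (Equiv.Perm.sign σ : ℤ) * (-1) ^ (n - q))
          = ((-1) ^ q * (-1) ^ (n - q)) * (-1) ^ (n - i) * (Equiv.Perm.sign σ : ℤ) := by ring
        _ = (-1) ^ n * (-1) ^ (n - i) * (Equiv.Perm.sign σ : ℤ) := by rw [hqn]
        _ = (-1) ^ i * (Equiv.Perm.sign σ : ℤ) := by rw [key i hin]
    exact final.symm
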